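/- For every k-dimensional normed space X, every 0 < ε ≤ 1, and every ε-separated subset A of the unit sphere of X, there exists a set D with {0} ∪ A ⊆ D ⊆ Ball(X) which is ε-dense in Ball(X), has |D| ≤ (1 + 4/ε)^k, and such that for every nonzero x ∈ Ball(X) there exists y ∈ D with ‖x − y‖ < ε and ‖y‖ < ‖x‖. -/

import Mathlib

open Metric Set MeasureTheory Module ENNReal

/-- In a `k`-dimensional real normed space `X`, for `0 < ε ≤ 1` and an `ε`-separated
subset `A` of the unit sphere, there is a set `D` with `{0} ∪ A ⊆ D ⊆ Ball(X)` which is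
`ε`-dense in the unit ball, has `|D| ≤ (1 + 4/ε)^k`, and such that every nonzero point of
the unit ball has a point of `D` within distance `< ε` and of strictly smaller norm. -/
theorem exists_good_net_of_sphere_separated
    (X : Type) [NormedAddCommGroup X] [NormedSpace ℝ X] [FiniteDimensional ℝ X]
    (ε : ℝ) (hε0 : 0 < ε) (hε1 : ε ≤ 1)
    (A : Set X) (hA : A ⊆ Metric.sphere 0 1)
    (hsep : ∀ x ∈ A, ∀ y ∈ A, x ≠ y → ε < dist x y) :
    ∃ D : Set X, insert (0 : X) A ⊆ D ∧ D ⊆ Metric.closedBall 0 1 ∧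
      (∀ b ∈ Metric.closedBall (0 : X) 1, ∃ d ∈ D, dist b d ≤ ε) ∧
      D.Finite ∧
      (Nat.card D : ℝ) ≤ (1 + 4 / ε) ^ (Module.finrank ℝ X) ∧
      ∀ x ∈ Metric.closedBall (0 : X) 1, x ≠ 0 →
        ∃ y ∈ D, ‖x - y‖ < ε ∧ ‖y‖ < ‖x‖ := by
  classical
  set k := Module.finrank ℝ X with hk
  set S : Set (Set X) := {s | insert (0 : X) A ⊆ s ∧ s ⊆ closedBall (0 : X) 1 ∧
    ∀ x ∈ s, ∀ y ∈ s, x ≠ y → ε / 2 ≤ dist x y} with hSdef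
  -- the base set is in S
  have hbase : insert (0 : X) A ∈ S := by
    refine ⟨subset_rfl, ?_, ?_⟩
    · intro x hx
      rcases hx with rfl | hx
      · simp
      · exact sphere_subset_closedBall (hA hx)
    · have hdist0 : ∀ a ∈ A, dist (0 : X) a = 1 := by
        intro a ha
        have := hA ha
        rw [mem_sphere_iff_norm, sub_zero] at this
        simp [dist_eq_norm, this]
      intro x hx y hy hxy
      rcases hx with rfl | hx
      · rcases hy with rfl | hy
        · exact absurd rfl hxy
        · rw [hdist0 y hy]; linarith
      · rcases hy with rfl | hy
        · rw [dist_comm, hdist0 x hx]; linarith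
        · have := hsep x hx y hy hxy; linarith
  -- Zorn's lemma to get a maximal element of S
  obtain ⟨D, hDbase, hDmax⟩ := zorn_subset_nonempty S (by
    intro c hcS hchain hcne
    refine ⟨⋃₀ c, ⟨?_, ?_, ?_⟩, fun s hs => subset_sUnion_of_mem hs⟩
    · obtain ⟨s, hs⟩ := hcne
      exact (hcS hs).1.trans (subset_sUnion_of_mem hs)
    · exact sUnion_subset fun s hs => (hcS hs).2.1
    · rintro x ⟨s, hs, hxs⟩ y ⟨t, ht, hyt⟩ hxy
      rcases hchain.total hs ht with h | h
      · exact (hcS ht).2.2 x (h hxs) y hyt hxy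
      · exact (hcS hs).2.2 x hxs y (h hyt) hxy) _ hbase
  obtain ⟨hDA, hDball, hDsep⟩ := hDmax.1
  -- maximality: every point of the ball is within < ε/2 of D
  have hnear : ∀ z ∈ closedBall (0 : X) 1, ∃ y ∈ D, dist z y < ε / 2 := by
    intro z hz
    by_contra hcon
    push_neg at hcon
    have hins : insert z D ∈ S := by
      refine ⟨hDA.trans (subset_insert _ _), insert_subset hz hDball, ?_⟩
      intro x hx y hy hxy
      rcases hx with rfl | hx
      · rcases hy with rfl | hy
        · exact absurd rfl hxy
        · exact hcon y hy
      · rcases hy with rfl | hy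
        · rw [dist_comm]; exact hcon x hx
        · exact hDsep x hx y hy hxy
    have hzD : z ∈ D := hDmax.2 hins (subset_insert _ _) (mem_insert _ _)
    have := hcon z hzD
    simp at this
    linarith
  -- measure-theoretic packing bound
  letI : MeasurableSpace X := borel X
  haveI : BorelSpace X := ⟨rfl⟩
  set μ : Measure X := (finBasis ℝ X).addHaar with hμ
  have hε4 : (0 : ℝ) < ε / 4 := by linarith
  have key : ∀ s : Finset X, ↑s ⊆ D → (s.card : ℝ) ≤ (1 + 4 / ε) ^ k := by
    intro s hsD
    have hdisj : (↑s : Set X).PairwiseDisjoint (fun y => ball y (ε / 4)) := by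
      intro a ha b hb hab
      have hsep' : ε / 2 ≤ dist a b := hDsep a (hsD ha) b (hsD hb) hab
      rw [Function.onFun, Set.disjoint_left]
      intro w hwa hwb
      rw [mem_ball] at hwa hwb
      have : dist a b < ε / 2 := by
        calc dist a b ≤ dist a w + dist w b := dist_triangle a w b
        _ < ε / 4 + ε / 4 := by rw [dist_comm a w]; exact add_lt_add hwa hwb
        _ = ε / 2 := by ring
      linarith
    have hsub2 : (⋃ y ∈ s, ball y (ε / 4)) ⊆ ball (0 : X) (1 + ε / 4) := by
      intro w hw
      simp only [Set.mem_iUnion, exists_prop] at hw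
      obtain ⟨y, hy, hwy⟩ := hw
      rw [mem_ball] at hwy ⊢
      have h1 : dist y 0 ≤ 1 := mem_closedBall.1 (hDball (hsD hy))
      calc dist w 0 ≤ dist w y + dist y 0 := dist_triangle w y 0
      _ < ε / 4 + 1 := add_lt_add_of_lt_of_le hwy h1
      _ = 1 + ε / 4 := by ring
    have htot : (s.card : ℝ≥0∞) * (ENNReal.ofReal ((ε / 4) ^ k) * μ (ball 0 1)) ≤
        ENNReal.ofReal ((1 + ε / 4) ^ k) * μ (ball 0 1) := by
      calc (s.card : ℝ≥0∞) * (ENNReal.ofReal ((ε / 4) ^ k) * μ (ball 0 1))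
          = ∑ y ∈ s, μ (ball y (ε / 4)) := by
            rw [Finset.sum_congr rfl (fun y _ => μ.addHaar_ball_of_pos y hε4),
              Finset.sum_const, nsmul_eq_mul]
      _ = μ (⋃ y ∈ s, ball y (ε / 4)) :=
            (measure_biUnion_finset hdisj fun b _ => measurableSet_ball).symm
      _ ≤ μ (ball (0 : X) (1 + ε / 4)) := measure_mono hsub2
      _ = _ := μ.addHaar_ball_of_pos _ (by linarith)
    have heq : ((1 : ℝ) + ε / 4) ^ k = (ε / 4) ^ k * (1 + 4 / ε) ^ k := by
      rw [← mul_pow]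
      congr 1
      field_simp
      ring
    rw [heq, ENNReal.ofReal_mul (by positivity)] at htot
    set W : ℝ≥0∞ := ENNReal.ofReal ((ε / 4) ^ k) * μ (ball (0 : X) 1) with hW
    have hW0 : W ≠ 0 := by
      refine mul_ne_zero ?_ ?_
      · simp [ENNReal.ofReal_eq_zero, not_le]
        positivity
      · exact (measure_ball_pos μ 0 one_pos).ne'
    have hWtop : W ≠ ⊤ :=
      ENNReal.mul_ne_top ENNReal.ofReal_ne_top measure_ball_lt_top.ne
    have hcard : (s.card : ℝ≥0∞) ≤ ENNReal.ofReal ((1 + 4 / ε) ^ k) := by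
      rw [← ENNReal.mul_le_mul_iff_left hW0 hWtop]
      calc (s.card : ℝ≥0∞) * W ≤ ENNReal.ofReal ((ε / 4) ^ k) *
          ENNReal.ofReal ((1 + 4 / ε) ^ k) * μ (ball 0 1) := htot
      _ = ENNReal.ofReal ((1 + 4 / ε) ^ k) * W := by rw [hW]; ring
    have := ENNReal.toReal_mono ENNReal.ofReal_ne_top hcard
    rwa [ENNReal.toReal_natCast, ENNReal.toReal_ofReal (by positivity)] at this
  -- finiteness
  have hDfin : D.Finite := by
    by_contra hinf
    have hinf : D.Infinite := hinf
    obtain ⟨s, hsD, hscard⟩ := hinf.exists_subset_card_eq (⌊(1 + 4 / ε) ^ k⌋₊ + 1)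
    have h1 : s.card ≤ ⌊(1 + 4 / ε) ^ k⌋₊ := Nat.le_floor (key s hsD)
    omega
  refine ⟨D, hDA, hDball, ?_, hDfin, ?_, ?_⟩
  · intro b hb
    obtain ⟨y, hy, hlt⟩ := hnear b hb
    exact ⟨y, hy, by linarith⟩
  · have h1 : Nat.card D = hDfin.toFinset.card := by
      rw [Nat.card_coe_set_eq, ncard_eq_toFinset_card _ hDfin]
    rw [h1]
    exact key hDfin.toFinset (by simp)
  · intro x hx hx0
    rcases lt_or_ge ‖x‖ ε with hlt | hge
    · refine ⟨0, hDA (mem_insert _ _), by simpa using hlt, by simpa using norm_pos_iff.2 hx0⟩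
    · have hxpos : (0 : ℝ) < ‖x‖ := lt_of_lt_of_le hε0 hge
      set c : ℝ := ε / (2 * ‖x‖) with hc
      have hc1 : c ≤ 1 / 2 := by
        rw [hc, div_le_div_iff₀ (by positivity) (by norm_num)]
        linarith
      have hcx : c * ‖x‖ = ε / 2 := by
        rw [hc]; field_simp
      set z : X := (1 - c) • x with hz
      have hznorm : ‖z‖ = ‖x‖ - ε / 2 := by
        rw [hz, norm_smul, Real.norm_eq_abs, abs_of_nonneg (by linarith)]
        nlinarith
      have hzball : z ∈ closedBall (0 : X) 1 := by
        rw [mem_closedBall, dist_zero_right, hznorm]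
        have := mem_closedBall.1 hx
        rw [dist_zero_right] at this
        linarith
      obtain ⟨y, hyD, hdistzy⟩ := hnear z hzball
      refine ⟨y, hyD, ?_, ?_⟩
      · have hxz : ‖x - z‖ = ε / 2 := by
          have : x - z = c • x := by rw [hz]; module
          rw [this, norm_smul, Real.norm_eq_abs, abs_of_nonneg (by positivity), hcx]
        calc ‖x - y‖ ≤ ‖x - z‖ + ‖z - y‖ := norm_sub_le_norm_sub_add_norm_sub x z y
        _ < ε / 2 + ε / 2 := by
            rw [hxz]
            exact add_lt_add_right (by rwa [dist_eq_norm] at hdistzy) _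
        _ = ε := by ring
      · calc ‖y‖ ≤ ‖z‖ + ‖y - z‖ := norm_le_norm_add_norm_sub' y z
        _ < (‖x‖ - ε / 2) + ε / 2 := by
            rw [hznorm]
            exact add_lt_add_right (by rwa [dist_comm, dist_eq_norm] at hdistzy) _
        _ = ‖x‖ := by ring
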